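/- For every positive integer d and every c > 0 there exists p₀ = p₀(c,d) ∈ (0,1) and constants c₁ > 0, C₂ (depending only on d) such that the following holds for all p ∈ (0,p₀). Let 1 ≤ r ≤ d, let H be a d-uniform hypergraph and I a (d−r)-uniform hypergraph on the same finite vertex set such that: (1) every e ∈ I has at least (c/p)^r extensions in H; (2) for every e ∈ I and every nonempty set A disjoint from e, the set e ∪ A has at most (c/p)^{r−|A|} extensions in H; and (3) I has branching factor c/p. Then there exists a subhypergraph K ⊆ H such that K contains at least c₁·|I|·(c/p)^r hyperedges and K has branching factor C₂·c/p. -/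

import Mathlib

open Finset

set_option maxHeartbeats 1000000

/-- `H` has branching factor `ρ`: for every `A` and `r ≥ 0`, the number of
hyperedges `e ∈ H` with `e ⊇ A` and `|e| = |A| + r` is at most `ρ^r`. -/
def branching (V : Type) [DecidableEq V] (H : Finset (Finset V)) (ρ : ℝ) : Prop :=
  ∀ (A : Finset V) (r : ℕ),
    ((H.filter (fun e => A ⊆ e ∧ e.card = A.card + r)).card : ℝ) ≤ ρ ^ r

/-- Second completion step: under the critical-level conditions, `H` has a
subhypergraph `K` with at least `c₁·|I|·(c/p)^r` hyperedges and branching factor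
`C₂·c/p`, where `c₁ > 0` and `C₂` depend only on `d`, and `p₀` on `c` and `d`. -/
theorem stmt16 :
    ∀ (d : ℕ), 0 < d →
      ∃ c₁ : ℝ, 0 < c₁ ∧ ∃ C₂ : ℝ,
        ∀ c : ℝ, 0 < c →
          ∃ p₀ : ℝ, p₀ ∈ Set.Ioo (0:ℝ) 1 ∧
            ∀ p : ℝ, p ∈ Set.Ioo (0:ℝ) p₀ →
              ∀ r : ℕ, 1 ≤ r → r ≤ d →
                ∀ (V : Type) [Fintype V] [DecidableEq V]
                  (H I : Finset (Finset V)),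
                  (∀ e ∈ H, e.card = d) →
                  (∀ e ∈ I, e.card = d - r) →
                  (∀ e ∈ I, (c / p)^r ≤ ((H.filter (fun e' => e ⊆ e')).card : ℝ)) →
                  (∀ e ∈ I, ∀ A : Finset V, A.Nonempty → Disjoint A e →
                    ((H.filter (fun e' => e ∪ A ⊆ e')).card : ℝ) ≤
                      (c / p) ^ ((r : ℤ) - (A.card : ℤ))) →
                  branching V I (c / p) →
                  ∃ K ⊆ H,
                    c₁ * (I.card : ℝ) * (c / p)^r ≤ (K.card : ℝ) ∧
                    branching V K (C₂ * (c / p)) := by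
  intro d hd
  refine ⟨(1/2)^d, by positivity, (2:ℝ)^(d+1), ?_⟩
  intro c hc
  refine ⟨min c 1 / 2, ⟨by positivity, ?_⟩, ?_⟩
  · calc min c 1 / 2 ≤ 1 / 2 := by gcongr; exact min_le_right _ _
      _ < 1 := by norm_num
  intro p hp r hr1 hrd V _ _ H I hH hI hext hup hbr
  obtain ⟨hp0, hpp⟩ := hp
  have hpc : p < c := by
    have : min c 1 / 2 ≤ c := by
      calc min c 1 / 2 ≤ c / 2 := by gcongr; exact min_le_left _ _
        _ ≤ c := by linarith
    linarith
  set ρ : ℝ := c / p with hρdef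
  have hρ0 : 0 < ρ := div_pos hc hp0
  have hρ1 : 1 ≤ ρ := by rw [hρdef, le_div_iff₀ hp0]; linarith
  have hρr1 : (1:ℝ) ≤ ρ ^ r := one_le_pow₀ hρ1
  set n : ℕ := ⌈ρ ^ r⌉₊ with hn
  classical
  have hKe' : ∀ e ∈ I, ∃ K' ⊆ H.filter (fun e' => e ⊆ e'), K'.card = n := by
    intro e he
    exact Finset.exists_subset_card_eq (Nat.ceil_le.mpr (hext e he))
  set Ke : Finset V → Finset (Finset V) :=
    fun e => if h : e ∈ I then (hKe' e h).choose else ∅ with hKedef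
  have hKe1 : ∀ e ∈ I, Ke e ⊆ H.filter (fun e' => e ⊆ e') := by
    intro e he
    simp only [hKedef, dif_pos he]
    exact (hKe' e he).choose_spec.1
  have hKe2 : ∀ e ∈ I, (Ke e).card = n := by
    intro e he
    simp only [hKedef, dif_pos he]
    exact (hKe' e he).choose_spec.2
  set K : Finset (Finset V) := I.biUnion Ke with hKdef
  have hKH : K ⊆ H := by
    intro x hx
    rw [hKdef, Finset.mem_biUnion] at hx
    obtain ⟨e, he, hx⟩ := hx
    exact (Finset.mem_filter.mp (hKe1 e he hx)).1
  have hnρ : (n : ℝ) ≤ 2 * ρ ^ r := by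
    have h1 : (n : ℝ) < ρ ^ r + 1 := Nat.ceil_lt_add_one (by positivity)
    linarith
  refine ⟨K, hKH, ?_, ?_⟩
  · -- lower bound on |K|
    have hsum : I.card * n ≤ K.card * 2 ^ d := by
      set P := (I ×ˢ K).filter (fun q => q.2 ∈ Ke q.1) with hP
      have hPmem : ∀ q ∈ P, q.1 ∈ I ∧ q.2 ∈ K ∧ q.2 ∈ Ke q.1 := by
        intro q hq
        rw [hP, Finset.mem_filter, Finset.mem_product] at hq
        exact ⟨hq.1.1, hq.1.2, hq.2⟩
      have h1 : I.card * n ≤ P.card := by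
        rw [Finset.card_eq_sum_card_fiberwise (f := fun q : Finset V × Finset V => q.1)
          (t := I) (fun q hq => (hPmem q hq).1)]
        calc I.card * n = ∑ _e ∈ I, n := by rw [Finset.sum_const, smul_eq_mul]
          _ ≤ ∑ e ∈ I, (P.filter fun q => q.1 = e).card := by
              apply Finset.sum_le_sum
              intro e he
              rw [← hKe2 e he]
              apply Finset.card_le_card_of_injOn (fun x => (e, x))
              · intro x hx
                refine Finset.mem_filter.mpr ⟨?_, rfl⟩
                rw [hP, Finset.mem_filter, Finset.mem_product]
                exact ⟨⟨he, Finset.subset_biUnion_of_mem Ke he hx⟩, hx⟩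
              · intro a _ b _ hab
                simpa using hab
      have h2 : P.card ≤ K.card * 2 ^ d := by
        rw [Finset.card_eq_sum_card_fiberwise (f := fun q : Finset V × Finset V => q.2)
          (t := K) (fun q hq => (hPmem q hq).2.1)]
        calc ∑ x ∈ K, (P.filter fun q => q.2 = x).card
            ≤ ∑ x ∈ K, 2 ^ d := by
              apply Finset.sum_le_sum
              intro x hx
              have : (P.filter fun q => q.2 = x).card ≤ x.powerset.card := by
                apply Finset.card_le_card_of_injOn (fun q => q.1)
                · intro q hq
                  rw [Finset.mem_coe, Finset.mem_filter] at hq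
                  obtain ⟨hqP, hq2⟩ := hq
                  obtain ⟨hq1, _, hqKe⟩ := hPmem q hqP
                  rw [Finset.mem_coe, Finset.mem_powerset]
                  have := (Finset.mem_filter.mp (hKe1 q.1 hq1 hqKe)).2
                  rwa [hq2] at this
                · intro a ha b hb hab
                  rw [Finset.mem_coe, Finset.mem_filter] at ha hb
                  exact Prod.ext hab (ha.2.trans hb.2.symm)
              calc (P.filter fun q => q.2 = x).card ≤ x.powerset.card := this
                _ = 2 ^ x.card := Finset.card_powerset x
                _ = 2 ^ d := by rw [hH x (hKH hx)]
          _ = K.card * 2 ^ d := by rw [Finset.sum_const, smul_eq_mul]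
      exact h1.trans h2
    have h1 : (I.card : ℝ) * ρ ^ r ≤ (K.card : ℝ) * 2 ^ d := by
      calc (I.card : ℝ) * ρ ^ r ≤ (I.card : ℝ) * n := by
            gcongr; exact Nat.le_ceil _
        _ ≤ (K.card : ℝ) * 2 ^ d := by exact_mod_cast hsum
    have h2 : ((1:ℝ)/2) ^ d * ((K.card : ℝ) * 2 ^ d) = K.card := by
      rw [div_pow, one_pow]
      field_simp
    calc (1/2:ℝ) ^ d * (I.card : ℝ) * ρ ^ r
        = (1/2:ℝ) ^ d * ((I.card : ℝ) * ρ ^ r) := by ring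
      _ ≤ (1/2:ℝ) ^ d * ((K.card : ℝ) * 2 ^ d) := by gcongr
      _ = K.card := h2
  · -- branching of K
    intro A s
    rcases Nat.eq_zero_or_pos s with hs0 | hs1
    · subst hs0
      simp only [pow_zero]
      have hsub : K.filter (fun e => A ⊆ e ∧ e.card = A.card + 0) ⊆ {A} := by
        intro e he
        rw [Finset.mem_filter] at he
        rw [Finset.mem_singleton]
        exact (Finset.eq_of_subset_of_card_le he.2.1 (by omega)).symm
      have := Finset.card_le_card hsub
      simp only [Finset.card_singleton] at this
      exact_mod_cast this
    by_cases hAs : A.card + s = d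
    · -- main case
      set T := K.filter (fun e => A ⊆ e ∧ e.card = A.card + s) with hT
      have hTsub : T ⊆ I.biUnion (fun e => (Ke e).filter (fun e' => A ⊆ e')) := by
        intro x hx
        rw [hT, Finset.mem_filter] at hx
        obtain ⟨hxK, hAx, _⟩ := hx
        rw [hKdef, Finset.mem_biUnion] at hxK
        obtain ⟨e, he, hxe⟩ := hxK
        rw [Finset.mem_biUnion]
        exact ⟨e, he, Finset.mem_filter.mpr ⟨hxe, hAx⟩⟩
      have hcard1 : (T.card : ℝ) ≤ ∑ e ∈ I, (((Ke e).filter (fun e' => A ⊆ e')).card : ℝ) := by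
        have := le_trans (Finset.card_le_card hTsub) (Finset.card_biUnion_le)
        exact_mod_cast this
      have hfib : ∑ e ∈ I, (((Ke e).filter (fun e' => A ⊆ e')).card : ℝ)
          = ∑ B ∈ A.powerset, ∑ e ∈ I.filter (fun e => A ∩ e = B),
              (((Ke e).filter (fun e' => A ⊆ e')).card : ℝ) := by
        exact (Finset.sum_fiberwise_of_maps_to
          (fun e _ => Finset.mem_powerset.mpr Finset.inter_subset_left) _).symm
      have hBbound : ∀ B ∈ A.powerset,
          ∑ e ∈ I.filter (fun e => A ∩ e = B),
              (((Ke e).filter (fun e' => A ⊆ e')).card : ℝ) ≤ 2 * ρ ^ s := by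
        intro B hB
        have hBA : B ⊆ A := Finset.mem_powerset.mp hB
        by_cases hBd : B.card ≤ d - r
        · -- fiber count via branching of I
          have hfibsub : I.filter (fun e => A ∩ e = B) ⊆
              I.filter (fun e => B ⊆ e ∧ e.card = B.card + (d - r - B.card)) := by
            intro e he
            rw [Finset.mem_filter] at he ⊢
            refine ⟨he.1, ?_, ?_⟩
            · rw [← he.2]; exact Finset.inter_subset_right
            · rw [hI e he.1]; omega
          have hfibcard : ((I.filter (fun e => A ∩ e = B)).card : ℝ)
              ≤ ρ ^ (d - r - B.card) := by
            calc ((I.filter (fun e => A ∩ e = B)).card : ℝ)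
                ≤ ((I.filter (fun e => B ⊆ e ∧ e.card = B.card + (d - r - B.card))).card : ℝ) := by
                  exact_mod_cast Finset.card_le_card hfibsub
              _ ≤ ρ ^ (d - r - B.card) := hbr B (d - r - B.card)
          by_cases hBAeq : B = A
          · -- B = A : use the size of Ke e
            have hterm : ∀ e ∈ I.filter (fun e => A ∩ e = B),
                (((Ke e).filter (fun e' => A ⊆ e')).card : ℝ) ≤ 2 * ρ ^ r := by
              intro e he
              rw [Finset.mem_filter] at he
              calc (((Ke e).filter (fun e' => A ⊆ e')).card : ℝ)
                  ≤ ((Ke e).card : ℝ) := by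
                    exact_mod_cast Finset.card_le_card (Finset.filter_subset _ _)
                _ = (n : ℝ) := by rw [hKe2 e he.1]
                _ ≤ 2 * ρ ^ r := hnρ
            have hABcard : B.card ≤ A.card := Finset.card_le_card hBA
            calc ∑ e ∈ I.filter (fun e => A ∩ e = B),
                  (((Ke e).filter (fun e' => A ⊆ e')).card : ℝ)
                ≤ (I.filter (fun e => A ∩ e = B)).card • (2 * ρ ^ r) :=
                  Finset.sum_le_card_nsmul _ _ _ hterm
              _ = ((I.filter (fun e => A ∩ e = B)).card : ℝ) * (2 * ρ ^ r) := by
                  rw [nsmul_eq_mul]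
              _ ≤ ρ ^ (d - r - B.card) * (2 * ρ ^ r) := by
                  gcongr
              _ = 2 * ρ ^ (d - r - B.card + r) := by rw [pow_add]; ring
              _ = 2 * ρ ^ s := by
                  congr 2
                  subst hBAeq
                  omega
          · -- B ⊊ A : use the upper bound hypothesis
            have hne : (A \ B).Nonempty := by
              rw [Finset.sdiff_nonempty]
              intro h
              exact hBAeq (Finset.Subset.antisymm hBA h)
            have hterm : ∀ e ∈ I.filter (fun e => A ∩ e = B),
                (((Ke e).filter (fun e' => A ⊆ e')).card : ℝ)
                  ≤ ρ ^ ((r : ℤ) - ((A \ B).card : ℤ)) := by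
              intro e he
              rw [Finset.mem_filter] at he
              obtain ⟨heI, heB⟩ := he
              have hdisj : Disjoint (A \ B) e := by
                rw [Finset.disjoint_left]
                intro x hx hxe
                rw [Finset.mem_sdiff] at hx
                exact hx.2 (heB ▸ Finset.mem_inter.mpr ⟨hx.1, hxe⟩)
              have hsub : (Ke e).filter (fun e' => A ⊆ e') ⊆
                  H.filter (fun e' => e ∪ (A \ B) ⊆ e') := by
                intro x hx
                rw [Finset.mem_filter] at hx
                obtain ⟨hxKe, hAx⟩ := hx
                have := Finset.mem_filter.mp (hKe1 e heI hxKe)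
                rw [Finset.mem_filter]
                exact ⟨this.1, Finset.union_subset this.2
                  ((Finset.sdiff_subset).trans hAx)⟩
              calc (((Ke e).filter (fun e' => A ⊆ e')).card : ℝ)
                  ≤ ((H.filter (fun e' => e ∪ (A \ B) ⊆ e')).card : ℝ) := by
                    exact_mod_cast Finset.card_le_card hsub
                _ ≤ ρ ^ ((r : ℤ) - ((A \ B).card : ℤ)) := hup e heI (A \ B) hne hdisj
            have hzpos : (0:ℝ) ≤ ρ ^ ((r : ℤ) - ((A \ B).card : ℤ)) :=
              le_of_lt (zpow_pos hρ0 _)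
            have hABcard : B.card ≤ A.card := Finset.card_le_card hBA
            have hsd : (A \ B).card = A.card - B.card := Finset.card_sdiff_of_subset hBA
            have hexp : ((d - r - B.card : ℕ) : ℤ) + ((r : ℤ) - ((A \ B).card : ℤ))
                = (s : ℤ) := by
              rw [hsd]
              omega
            calc ∑ e ∈ I.filter (fun e => A ∩ e = B),
                  (((Ke e).filter (fun e' => A ⊆ e')).card : ℝ)
                ≤ (I.filter (fun e => A ∩ e = B)).card
                    • (ρ ^ ((r : ℤ) - ((A \ B).card : ℤ))) :=
                  Finset.sum_le_card_nsmul _ _ _ hterm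
              _ = ((I.filter (fun e => A ∩ e = B)).card : ℝ)
                    * ρ ^ ((r : ℤ) - ((A \ B).card : ℤ)) := by rw [nsmul_eq_mul]
              _ ≤ ρ ^ (d - r - B.card) * ρ ^ ((r : ℤ) - ((A \ B).card : ℤ)) := by
                  gcongr
              _ = ρ ^ (((d - r - B.card : ℕ) : ℤ) + ((r : ℤ) - ((A \ B).card : ℤ))) := by
                  rw [← zpow_natCast ρ (d - r - B.card), ← zpow_add₀ (ne_of_gt hρ0)]
              _ = ρ ^ (s : ℤ) := by rw [hexp]
              _ = ρ ^ s := zpow_natCast ρ s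
              _ ≤ 2 * ρ ^ s := by nlinarith [pow_pos hρ0 s]
        · -- B.card > d - r : the fiber is empty
          have : I.filter (fun e => A ∩ e = B) = ∅ := by
            rw [Finset.filter_eq_empty_iff]
            intro e he hcontra
            have h1 : B ⊆ e := by rw [← hcontra]; exact Finset.inter_subset_right
            have h2 := Finset.card_le_card h1
            rw [hI e he] at h2
            omega
          rw [this, Finset.sum_empty]
          positivity
      have hAd : A.card ≤ d := by omega
      calc (T.card : ℝ)
          ≤ ∑ B ∈ A.powerset, ∑ e ∈ I.filter (fun e => A ∩ e = B),
              (((Ke e).filter (fun e' => A ⊆ e')).card : ℝ) := by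
            rw [← hfib]; exact hcard1
        _ ≤ ∑ B ∈ A.powerset, 2 * ρ ^ s := Finset.sum_le_sum hBbound
        _ = (2:ℝ) ^ A.card * (2 * ρ ^ s) := by
            rw [Finset.sum_const, Finset.card_powerset, nsmul_eq_mul]
            push_cast
            ring
        _ = (2:ℝ) ^ (A.card + 1) * ρ ^ s := by rw [pow_succ]; ring
        _ ≤ (2:ℝ) ^ (d + 1) * ρ ^ s := by
            have h2 : (2:ℝ) ^ (A.card + 1) ≤ 2 ^ (d + 1) :=
              pow_le_pow_right₀ (by norm_num) (by omega)
            exact mul_le_mul_of_nonneg_right h2 (by positivity)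
        _ ≤ ((2:ℝ) ^ (d + 1)) ^ s * ρ ^ s := by
            have h2 : (2:ℝ) ^ (d + 1) ≤ ((2:ℝ) ^ (d + 1)) ^ s :=
              le_self_pow₀ (one_le_pow₀ (by norm_num)) (by omega)
            exact mul_le_mul_of_nonneg_right h2 (by positivity)
        _ = ((2:ℝ) ^ (d + 1) * ρ) ^ s := (mul_pow _ _ _).symm
    · -- |A| + s ≠ d : the set is empty
      have hempty : K.filter (fun e => A ⊆ e ∧ e.card = A.card + s) = ∅ := by
        rw [Finset.filter_eq_empty_iff]
        intro e he hcontra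
        exact hAs (hcontra.2 ▸ (hH e (hKH he)).symm ▸ rfl)
      rw [hempty]
      simp only [Finset.card_empty, Nat.cast_zero]
      positivity
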